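/- arXiv:alg-geom/9503021 — 3 statements merged into one kernel-verified Lean document; each statement's English description precedes it below -/
import Mathlib

section
/- Let E and F be finite dimensional complex vector spaces, and let s : F → E and t : E → F be linear maps with st = θ_E and ts = θ_F for fixed endomorphisms θ_E ∈ End(E), θ_F ∈ End(F). If (a,b) is a pair of linear maps a : F → E, b : E → F satisfying at + sb = 0 and ta + bs = 0 (a Zariski tangent vector to the variety of such pairs (s,t)), and if a = 0 and b∘f(st) = 0, where f is the entire function f(x) = (e^x − 1)/x applied to the endomorphism st, then b = 0. Consequently the differential of the map φ(s,t) = (s, t∘f(st)) is injective on the tangent space of the variety {(s,t) : st = θ_E, ts = θ_F}. -/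
/-- The entire function `f(x) = (e^x - 1)/x = ∑_{k≥0} x^k/(k+1)!` applied to a
square complex matrix. -/
noncomputable def matF {n : ℕ} (A : Matrix (Fin n) (Fin n) ℂ) :
    Matrix (Fin n) (Fin n) ℂ :=
  ∑' k : ℕ, (((k + 1).factorial : ℂ))⁻¹ • A ^ k

section Aux

attribute [local instance] Matrix.linftyOpNormedRing Matrix.linftyOpNormedAlgebra
attribute [local instance] Matrix.linftyOpNormedAddCommGroup Matrix.linftyOpNormedSpace

private lemma matF_summable {n : ℕ} (A : Matrix (Fin n) (Fin n) ℂ) :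
    Summable (fun k : ℕ => (((k + 1).factorial : ℂ))⁻¹ • A ^ k) := by
  apply Summable.of_norm
  apply Summable.of_nonneg_of_le (fun k => norm_nonneg _) (fun k => ?_)
    ((Real.summable_pow_div_factorial ‖A‖).mul_left (1 + ‖(1 : Matrix (Fin n) (Fin n) ℂ)‖))
  have hfac : ((k.factorial : ℝ))⁻¹ ≥ (((k+1).factorial : ℝ))⁻¹ := by
    apply inv_anti₀
    · exact_mod_cast k.factorial_pos
    · exact_mod_cast Nat.factorial_le (Nat.le_succ k)
  have hnorm : ‖(((k + 1).factorial : ℂ))⁻¹ • A ^ k‖ = (((k+1).factorial : ℝ))⁻¹ * ‖A ^ k‖ := by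
    rw [norm_smul]; simp
  rcases Nat.eq_zero_or_pos k with rfl | hk
  · rw [hnorm]
    have h1 : ‖(1 : Matrix (Fin n) (Fin n) ℂ)‖ ≥ 0 := norm_nonneg _
    have e1 : ((0+1).factorial : ℝ)⁻¹ = 1 := by norm_num [Nat.factorial]
    have e2 : ‖A‖ ^ 0 / (Nat.factorial 0 : ℝ) = 1 := by norm_num [Nat.factorial]
    rw [pow_zero, e1, e2, one_mul, mul_one]
    linarith
  · calc ‖(((k + 1).factorial : ℂ))⁻¹ • A ^ k‖
        ≤ (k.factorial : ℝ)⁻¹ * ‖A‖ ^ k := by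
          rw [hnorm]
          apply mul_le_mul hfac (norm_pow_le' _ hk) (norm_nonneg _)
          positivity
      _ = 1 * (‖A‖ ^ k / k.factorial) := by ring
      _ ≤ (1 + ‖(1 : Matrix (Fin n) (Fin n) ℂ)‖) * (‖A‖ ^ k / k.factorial) := by
          have h1 := norm_nonneg (1 : Matrix (Fin n) (Fin n) ℂ)
          have h2 : (0:ℝ) ≤ ‖A‖ ^ k / k.factorial := by positivity
          nlinarith

private lemma mul_matF_of_mul_left_eq_zero {m n : ℕ}
    (s : Matrix (Fin m) (Fin n) ℂ) (t : Matrix (Fin n) (Fin m) ℂ)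
    (b : Matrix (Fin n) (Fin m) ℂ) (hbs : b * s = 0) :
    b * matF (s * t) = b := by
  classical
  set A := s * t with hA
  let L : Matrix (Fin m) (Fin m) ℂ →ₗ[ℂ] Matrix (Fin n) (Fin m) ℂ :=
    { toFun := fun M => b * M
      map_add' := fun x y => Matrix.mul_add b x y
      map_smul' := fun c x => (Matrix.mul_smul b c x) }
  have hL : Continuous L := L.continuous_of_finiteDimensional
  have hsum := matF_summable A
  have h1 : b * matF A = ∑' k : ℕ, b * ((((k + 1).factorial : ℂ))⁻¹ • A ^ k) := by
    have := hsum.hasSum.mapL (LinearMap.toContinuousLinearMap L)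
    simpa [matF, L] using this.tsum_eq.symm
  rw [h1]
  rw [tsum_eq_single 0 ?_]
  · simp [Nat.factorial]
  · intro k hk
    obtain ⟨j, rfl⟩ := Nat.exists_eq_succ_of_ne_zero hk
    rw [Matrix.mul_smul, pow_succ', hA, ← Matrix.mul_assoc, ← Matrix.mul_assoc, hbs]
    simp

end Aux

/-- Rigidity lemma: with `s t = θ_E`, `t s = θ_F`, if `(a,b)` is a Zariski tangent
vector to the variety `{(s,t) : st = θ_E, ts = θ_F}` (i.e. `a t + s b = 0` and
`t a + b s = 0`) with `a = 0` and `b ∘ f(st) = 0`, then `b = 0`; consequently the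
differential of `φ(s,t) = (s, t ∘ f(st))` is injective on the tangent space. -/
theorem dphi_injective_on_tangent_space {m n : ℕ}
    (θE : Matrix (Fin m) (Fin m) ℂ) (θF : Matrix (Fin n) (Fin n) ℂ)
    (s : Matrix (Fin m) (Fin n) ℂ) (t : Matrix (Fin n) (Fin m) ℂ)
    (hst : s * t = θE) (hts : t * s = θF)
    (a : Matrix (Fin m) (Fin n) ℂ) (b : Matrix (Fin n) (Fin m) ℂ)
    (htan₁ : a * t + s * b = 0) (htan₂ : t * a + b * s = 0)
    (ha : a = 0) (hb : b * matF (s * t) = 0) :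
    b = 0 ∧
    ∀ (a' : Matrix (Fin m) (Fin n) ℂ) (b' : Matrix (Fin n) (Fin m) ℂ),
      a' * t + s * b' = 0 → t * a' + b' * s = 0 →
      a' = 0 → b' * matF (s * t) = 0 → a' = 0 ∧ b' = 0 := by
  have key : ∀ (b' : Matrix (Fin n) (Fin m) ℂ), b' * s = 0 → b' * matF (s * t) = 0 → b' = 0 := by
    intro b' hbs hb'
    have := mul_matF_of_mul_left_eq_zero s t b' hbs
    rw [hb'] at this
    exact this.symm
  have hbs : b * s = 0 := by
    have := htan₂
    rw [ha] at this
    simpa using this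
  refine ⟨key b hbs hb, ?_⟩
  intro a' b' h1 h2 ha' hb'
  have hbs' : b' * s = 0 := by
    rw [ha'] at h2
    simpa using h2
  exact ⟨ha', key b' hbs' hb'⟩
end

section
/- Let E and F be finite dimensional complex vector spaces with endomorphisms θ_E, θ_F, and let s : F → E, t : E → F satisfy st = θ_E, ts = θ_F. Set C = t ∘ g(θ_E) where g(x) = (e^{-2πi x} − 1)/x (entire, g(0) = −2πi), and V = s. Then V C = exp(−2πi θ_E) − id on E and C V = exp(−2πi θ_F) − id on F. -/
open Complex

/-- The matrix exponential, `exp(A) = ∑_{k≥0} A^k/k!`. -/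
noncomputable def matExp {n : ℕ} (A : Matrix (Fin n) (Fin n) ℂ) :
    Matrix (Fin n) (Fin n) ℂ :=
  ∑' k : ℕ, ((k.factorial : ℂ))⁻¹ • A ^ k

/-- The entire function `g(x) = (e^{-2πi x} - 1)/x` (with `g(0) = -2πi`) applied
to a square complex matrix. -/
noncomputable def matG {n : ℕ} (A : Matrix (Fin n) (Fin n) ℂ) :
    Matrix (Fin n) (Fin n) ℂ :=
  ∑' k : ℕ, ((-(2 * (Real.pi : ℂ) * I)) ^ (k + 1) / ((k + 1).factorial : ℂ)) • A ^ k

namespace MalgrangeAux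

attribute [local instance] Matrix.linftyOpNormedAddCommGroup Matrix.linftyOpNormedRing
  Matrix.linftyOpNormedAlgebra

/-- A generic summability criterion for matrix power series. -/
lemma summable_smul_pow {m : ℕ} (A : Matrix (Fin m) (Fin m) ℂ) (b : ℕ → ℂ)
    (hb : Summable fun k : ℕ => ‖b k‖ * (‖A‖ + 1) ^ k) :
    Summable (fun k : ℕ => b k • A ^ k) := by
  set M : Matrix (Fin m) (Fin m) ℂ := 1
  apply Summable.of_norm_bounded
    (g := fun k : ℕ => (‖M‖ + 1) * (‖b k‖ * (‖A‖ + 1) ^ k)) (hb.mul_left _)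
  intro k
  rw [norm_smul]
  have hA1 : (0:ℝ) ≤ ‖A‖ + 1 := by positivity
  have hM1 : (1:ℝ) ≤ ‖M‖ + 1 := by linarith [norm_nonneg M]
  have hpow : ‖A ^ k‖ ≤ (‖M‖ + 1) * (‖A‖ + 1) ^ k := by
    rcases Nat.eq_zero_or_pos k with hk | hk
    · subst hk
      simp only [pow_zero, mul_one]
      linarith [norm_nonneg M]
    · calc ‖A ^ k‖ ≤ ‖A‖ ^ k := norm_pow_le' A hk
        _ ≤ (‖A‖ + 1) ^ k := by
            exact pow_le_pow_left₀ (norm_nonneg A) (by linarith) k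
        _ ≤ (‖M‖ + 1) * (‖A‖ + 1) ^ k := by
            nlinarith [pow_nonneg hA1 k]
  calc ‖b k‖ * ‖A ^ k‖ ≤ ‖b k‖ * ((‖M‖ + 1) * (‖A‖ + 1) ^ k) := by
        exact mul_le_mul_of_nonneg_left hpow (norm_nonneg _)
    _ = (‖M‖ + 1) * (‖b k‖ * (‖A‖ + 1) ^ k) := by ring

lemma norm_coeff (c : ℂ) (j : ℕ) : ‖c ^ j / (j.factorial : ℂ)‖ = ‖c‖ ^ j / j.factorial := by
  rw [norm_div, norm_pow]
  congr 1
  rw [Complex.norm_natCast]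

lemma summable_exp_coeff {m : ℕ} (c : ℂ) (A : Matrix (Fin m) (Fin m) ℂ) :
    Summable fun k : ℕ => ‖c ^ k / (k.factorial : ℂ)‖ * (‖A‖ + 1) ^ k := by
  have h := Real.summable_pow_div_factorial (‖c‖ * (‖A‖ + 1))
  apply h.congr
  intro k
  rw [norm_coeff, mul_pow]
  ring

lemma summable_G_coeff {m : ℕ} (c : ℂ) (A : Matrix (Fin m) (Fin m) ℂ) :
    Summable fun k : ℕ => ‖c ^ (k + 1) / ((k + 1).factorial : ℂ)‖ * (‖A‖ + 1) ^ k := by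
  have h := (summable_nat_add_iff 1).2 (Real.summable_pow_div_factorial (‖c‖ * (‖A‖ + 1)))
  apply Summable.of_nonneg_of_le (fun k => by positivity) _ h
  intro k
  rw [norm_coeff, mul_pow, div_mul_eq_mul_div]
  have hA1 : (1:ℝ) ≤ ‖A‖ + 1 := by linarith [norm_nonneg A]
  gcongr
  · exact Nat.le_succ k

/-- The G series is summable. -/
lemma summable_G {m : ℕ} (c : ℂ) (A : Matrix (Fin m) (Fin m) ℂ) :
    Summable (fun k : ℕ => (c ^ (k + 1) / ((k + 1).factorial : ℂ)) • A ^ k) :=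
  summable_smul_pow A _ (summable_G_coeff c A)

/-- The exp series is summable. -/
lemma summable_E {m : ℕ} (c : ℂ) (A : Matrix (Fin m) (Fin m) ℂ) :
    Summable (fun k : ℕ => (c ^ k / (k.factorial : ℂ)) • A ^ k) :=
  summable_smul_pow A _ (summable_exp_coeff c A)

lemma matExp_smul_eq {m : ℕ} (c : ℂ) (A : Matrix (Fin m) (Fin m) ℂ) :
    matExp (c • A) = ∑' k : ℕ, (c ^ k / (k.factorial : ℂ)) • A ^ k := by
  unfold matExp
  congr 1
  funext k
  rw [smul_pow, smul_smul, div_eq_mul_inv, mul_comm]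

/-- The key identity: `∑_{k} c^{k+1}/(k+1)! A^{k+1} = exp(cA) - 1`. -/
lemma key {m : ℕ} (c : ℂ) (A : Matrix (Fin m) (Fin m) ℂ) :
    ∑' k : ℕ, (c ^ (k + 1) / ((k + 1).factorial : ℂ)) • A ^ (k + 1)
      = matExp (c • A) - 1 := by
  rw [matExp_smul_eq]
  rw [(summable_E c A).tsum_eq_zero_add]
  simp only [pow_zero, Nat.factorial_zero, Nat.cast_one, div_one, one_smul]
  abel

/-- `t (st)^k s = (ts)^{k+1}`. -/
lemma conj_pow {m n : ℕ} (s : Matrix (Fin m) (Fin n) ℂ) (t : Matrix (Fin n) (Fin m) ℂ) :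
    ∀ k : ℕ, t * (s * t) ^ k * s = (t * s) ^ (k + 1) := by
  intro k
  induction k with
  | zero => simp
  | succ k ih =>
    calc t * (s * t) ^ (k + 1) * s = (t * (s * t) ^ k * s) * (t * s) := by
          rw [pow_succ]
          simp only [Matrix.mul_assoc]
      _ = (t * s) ^ (k + 1) * (t * s) := by rw [ih]
      _ = (t * s) ^ (k + 2) := by rw [← pow_succ]

end MalgrangeAux

open MalgrangeAux in
/-- From pre-D-module data `(s,t)` with `st = θ_E`, `ts = θ_F`, the maps
`C = t ∘ g(θ_E)` and `V = s` satisfy the Malgrange/Verdier relations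
`V C = exp(-2πi θ_E) - id` and `C V = exp(-2πi θ_F) - id`. -/
theorem malgrange_relations_from_preD {m n : ℕ}
    (θE : Matrix (Fin m) (Fin m) ℂ) (θF : Matrix (Fin n) (Fin n) ℂ)
    (s : Matrix (Fin m) (Fin n) ℂ) (t : Matrix (Fin n) (Fin m) ℂ)
    (hst : s * t = θE) (hts : t * s = θF)
    (C : Matrix (Fin n) (Fin m) ℂ) (V : Matrix (Fin m) (Fin n) ℂ)
    (hC : C = t * matG θE) (hV : V = s) :
    V * C = matExp ((-(2 * (Real.pi : ℂ) * I)) • θE) - 1 ∧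
    C * V = matExp ((-(2 * (Real.pi : ℂ) * I)) • θF) - 1 := by
  set c : ℂ := -(2 * (Real.pi : ℂ) * I) with hc
  have hG : HasSum (fun k : ℕ => (c ^ (k + 1) / ((k + 1).factorial : ℂ)) • θE ^ k)
      (matG θE) := (summable_G c θE).hasSum
  constructor
  · -- V C = s t g(θE) = θE g(θE)
    have hmul : HasSum (fun k : ℕ => θE * ((c ^ (k + 1) / ((k + 1).factorial : ℂ)) • θE ^ k))
        (θE * matG θE) := by
      have cont : Continuous (fun X : Matrix (Fin m) (Fin m) ℂ => θE * X) :=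
        continuous_const.matrix_mul continuous_id
      exact hG.map (AddMonoidHom.mk' (fun X => θE * X) (fun a b => Matrix.mul_add θE a b)) cont
    simp only [mul_smul_comm, ← pow_succ'] at hmul
    have h1 : θE * matG θE = matExp (c • θE) - 1 := by
      rw [← hmul.tsum_eq, key]
    calc V * C = s * (t * matG θE) := by rw [hV, hC]
      _ = (s * t) * matG θE := by rw [Matrix.mul_assoc]
      _ = θE * matG θE := by rw [hst]
      _ = matExp (c • θE) - 1 := h1
  · -- C V = t g(θE) s
    have hmul : HasSum (fun k : ℕ => t * ((c ^ (k + 1) / ((k + 1).factorial : ℂ)) • θE ^ k))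
        (t * matG θE) := by
      have cont : Continuous (fun X : Matrix (Fin m) (Fin m) ℂ => t * X) :=
        continuous_const.matrix_mul continuous_id
      exact hG.map (AddMonoidHom.mk' (fun X => t * X) (fun a b => Matrix.mul_add t a b)) cont
    have hmul2 : HasSum
        (fun k : ℕ => (t * ((c ^ (k + 1) / ((k + 1).factorial : ℂ)) • θE ^ k)) * s)
        ((t * matG θE) * s) := by
      have cont : Continuous (fun X : Matrix (Fin n) (Fin m) ℂ => X * s) :=
        continuous_id.matrix_mul continuous_const
      exact hmul.map (AddMonoidHom.mk' (fun X => X * s) (fun a b => Matrix.add_mul a b s)) cont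
    have heq : (fun k : ℕ => (t * ((c ^ (k + 1) / ((k + 1).factorial : ℂ)) • θE ^ k)) * s)
        = fun k : ℕ => (c ^ (k + 1) / ((k + 1).factorial : ℂ)) • θF ^ (k + 1) := by
      funext k
      rw [Matrix.mul_smul, Matrix.smul_mul, ← hst, conj_pow s t k, hts]
    rw [heq] at hmul2
    have h2 : (t * matG θE) * s = matExp (c • θF) - 1 := by
      rw [← hmul2.tsum_eq, key]
    rw [hC, hV, h2]
end

section
/- Let V, W be finite dimensional vector spaces over an infinite field k, and let the multiplicative group k* act on V × W by λ·(v,w) = (λv, λ^{-1}w). Then the ring of k*-invariant polynomial functions on V × W is generated by the bilinear functions (v,w) ↦ ξ(v)·η(w) for ξ ∈ V*, η ∈ W*; equivalently, the invariant ring is the image of Sym((V ⊗ W)*) under the pullback along the tensor map V × W → V ⊗ W. -/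
open MvPolynomial

/-- Scale each variable `s` by `u s`. -/
noncomputable def scaleVars {k : Type*} [CommSemiring k] {σ : Type*}
    (u : σ → k) (f : MvPolynomial σ k) : MvPolynomial σ k :=
  ∑ d ∈ f.support, monomial d (coeff d f * d.prod fun s e => u s ^ e)

theorem coeff_scaleVars {k : Type*} [CommSemiring k] {σ : Type*}
    (u : σ → k) (f : MvPolynomial σ k) (e : σ →₀ ℕ) :
    coeff e (scaleVars u f) = coeff e f * e.prod fun s i => u s ^ i := by
  classical
  rw [scaleVars]
  rw [coeff_sum]
  simp only [coeff_monomial]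
  rw [Finset.sum_ite_eq' f.support e]
  split_ifs with h
  · rfl
  · rw [notMem_support_iff.mp h, zero_mul]

theorem eval_scaleVars {k : Type*} [CommSemiring k] {σ : Type*}
    (u : σ → k) (f : MvPolynomial σ k) (p : σ → k) :
    eval p (scaleVars u f) = eval (fun s => u s * p s) f := by
  classical
  rw [scaleVars, map_sum]
  conv_rhs => rw [eval_eq]
  refine Finset.sum_congr rfl fun d hd => ?_
  rw [eval_monomial]
  rw [mul_assoc]
  congr 1
  rw [Finsupp.prod, Finsupp.prod, ← Finset.prod_mul_distrib]
  refine Finset.prod_congr rfl fun s hs => ?_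
  rw [mul_pow]

theorem balanced_monomial_mem {k : Type*} [CommSemiring k] {m n : ℕ} (N : ℕ) :
    ∀ (d : (Fin m ⊕ Fin n) →₀ ℕ) (a : k),
      (∑ i, d (Sum.inl i)) = N → (∑ j, d (Sum.inr j)) = N →
      monomial d a ∈ Algebra.adjoin k
        (Set.range fun p : Fin m × Fin n =>
          X (Sum.inl p.1) * X (Sum.inr p.2) : Set (MvPolynomial (Fin m ⊕ Fin n) k)) := by
  classical
  induction N with
  | zero =>
    intro d a h1 h2
    have hd : d = 0 := by
      ext s
      cases s with
      | inl i =>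
        have := Finset.sum_eq_zero_iff.mp h1 i (Finset.mem_univ i)
        simpa using this
      | inr j =>
        have := Finset.sum_eq_zero_iff.mp h2 j (Finset.mem_univ j)
        simpa using this
    rw [hd, monomial_zero', ← algebraMap_eq]
    exact Subalgebra.algebraMap_mem _ a
  | succ N ih =>
    intro d a h1 h2
    obtain ⟨i, hi⟩ : ∃ i, d (Sum.inl i) ≠ 0 := by
      by_contra h
      push_neg at h
      simp [h] at h1
    obtain ⟨j, hj⟩ : ∃ j, d (Sum.inr j) ≠ 0 := by
      by_contra h
      push_neg at h
      simp [h] at h2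
    set d' : (Fin m ⊕ Fin n) →₀ ℕ :=
      d - Finsupp.single (Sum.inl i) 1 - Finsupp.single (Sum.inr j) 1 with hd'
    have hdec : d = Finsupp.single (Sum.inl i) 1 + Finsupp.single (Sum.inr j) 1 + d' := by
      ext s
      have h1s := Nat.one_le_iff_ne_zero.mpr hi
      have h2s := Nat.one_le_iff_ne_zero.mpr hj
      simp only [hd', Finsupp.add_apply, Finsupp.tsub_apply, Finsupp.single_apply]
      rcases s with s | s
      · rcases eq_or_ne i s with rfl | hs
        · rw [if_pos rfl, if_neg (by simp)]
          omega
        · rw [if_neg (fun h => hs (Sum.inl.inj h)), if_neg (by simp)]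
          omega
      · rcases eq_or_ne j s with rfl | hs
        · rw [if_pos rfl, if_neg (by simp)]
          omega
        · rw [if_neg (fun h => hs (Sum.inr.inj h)), if_neg (by simp)]
          omega
    have hA' : (∑ i', d' (Sum.inl i')) = N := by
      have : (∑ i', d (Sum.inl i')) = 1 + ∑ i', d' (Sum.inl i') := by
        rw [hdec]
        simp [Finsupp.single_apply, Finset.sum_add_distrib, Finset.sum_ite_eq']
      omega
    have hB' : (∑ j', d' (Sum.inr j')) = N := by
      have : (∑ j', d (Sum.inr j')) = 1 + ∑ j', d' (Sum.inr j') := by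
        rw [hdec]
        simp [Finsupp.single_apply, Finset.sum_add_distrib, Finset.sum_ite_eq']
      omega
    have key : monomial d a
        = (X (Sum.inl i) * X (Sum.inr j)) * monomial d' a := by
      rw [X, X, monomial_mul, monomial_mul, hdec, one_mul, one_mul]
    rw [key]
    exact mul_mem (Algebra.subset_adjoin ⟨(i, j), rfl⟩) (ih d' a hA' hB')

/-- Over an infinite field, a polynomial function on `V × W` invariant under the
`GL(1)`-action `λ·(v,w) = (λv, λ⁻¹w)` lies in the subalgebra generated by the
bilinear functions `(v,w) ↦ x_i(v)·y_j(w)`; i.e. the invariant ring is the image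
of the pullback along the tensor map `V × W → V ⊗ W`. -/
theorem GL1_invariants_generated_by_bilinear_forms
    {k : Type*} [Field k] [Infinite k] {m n : ℕ}
    (f : MvPolynomial (Fin m ⊕ Fin n) k)
    (hinv : ∀ lam : k, lam ≠ 0 → ∀ (v : Fin m → k) (w : Fin n → k),
      eval (Sum.elim (lam • v) (lam⁻¹ • w)) f = eval (Sum.elim v w) f) :
    f ∈ Algebra.adjoin k
      (Set.range fun p : Fin m × Fin n =>
        X (Sum.inl p.1) * X (Sum.inr p.2) : Set (MvPolynomial (Fin m ⊕ Fin n) k)) := by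
  classical
  -- the invariance in the form f(c v, w) = f(v, c w)
  have hinv' : ∀ (c : k), c ≠ 0 → ∀ (v : Fin m → k) (w : Fin n → k),
      eval (Sum.elim (c • v) w) f = eval (Sum.elim v (c • w)) f := by
    intro c hc v w
    have := hinv c hc v (c • w)
    rwa [smul_smul, inv_mul_cancel₀ hc, one_smul] at this
  -- scaled polynomials agree
  have hscale : ∀ (c : k), c ≠ 0 →
      scaleVars (Sum.elim (fun _ => c) (fun _ => (1 : k))) f
        = scaleVars (Sum.elim (fun _ => (1 : k)) (fun _ => c)) f := by
    intro c hc
    apply MvPolynomial.funext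
    intro p
    rw [eval_scaleVars, eval_scaleVars]
    have hL : (fun s => Sum.elim (fun _ => c) (fun _ => (1 : k)) s * p s)
        = Sum.elim (c • (p ∘ Sum.inl)) (p ∘ Sum.inr) := by
      funext s; rcases s with s | s <;> simp
    have hR : (fun s => Sum.elim (fun _ => (1 : k)) (fun _ => c) s * p s)
        = Sum.elim (p ∘ Sum.inl) (c • (p ∘ Sum.inr)) := by
      funext s; rcases s with s | s <;> simp
    rw [hL, hR]
    exact hinv' c hc _ _
  -- each monomial in the support is balanced
  have hbal : ∀ d ∈ f.support, (∑ i, d (Sum.inl i)) = (∑ j, d (Sum.inr j)) := by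
    intro d hd
    set A := ∑ i, d (Sum.inl i) with hA
    set B := ∑ j, d (Sum.inr j) with hB
    have hprodL : ∀ c : k,
        (d.prod fun s e => Sum.elim (fun _ => c) (fun _ => (1 : k)) s ^ e) = c ^ A := by
      intro c
      rw [Finsupp.prod]
      rw [Finset.prod_subset (Finset.subset_univ d.support)
        (by intro s _ hs; rw [Finsupp.notMem_support_iff.mp hs, pow_zero])]
      rw [Fintype.prod_sum_type]
      simp [Finset.prod_pow_eq_pow_sum, hA]
    have hprodR : ∀ c : k,
        (d.prod fun s e => Sum.elim (fun _ => (1 : k)) (fun _ => c) s ^ e) = c ^ B := by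
      intro c
      rw [Finsupp.prod]
      rw [Finset.prod_subset (Finset.subset_univ d.support)
        (by intro s _ hs; rw [Finsupp.notMem_support_iff.mp hs, pow_zero])]
      rw [Fintype.prod_sum_type]
      simp [Finset.prod_pow_eq_pow_sum, hB]
    have hcoeff : coeff d f ≠ 0 := mem_support_iff.mp hd
    have hpow : ∀ c : k, c ≠ 0 → (c : k) ^ A = c ^ B := by
      intro c hc
      have h := congrArg (coeff d) (hscale c hc)
      rw [coeff_scaleVars, coeff_scaleVars, hprodL, hprodR] at h
      exact mul_left_cancel₀ hcoeff (by linear_combination h)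
    -- conclude A = B from infinitude of k
    have hP : (Polynomial.X ^ A - Polynomial.X ^ B : Polynomial k) = 0 := by
      apply Polynomial.eq_zero_of_infinite_isRoot
      apply Set.Infinite.mono (s := {c : k | c ≠ 0})
      · intro c hc
        simp only [Set.mem_setOf_eq, Polynomial.IsRoot, Polynomial.eval_sub,
          Polynomial.eval_pow, Polynomial.eval_X]
        rw [hpow c hc, sub_self]
      · exact (Set.finite_singleton (0 : k)).infinite_compl
    have hXX : (Polynomial.X ^ A : Polynomial k) = Polynomial.X ^ B :=
      sub_eq_zero.mp hP
    have := congrArg Polynomial.natDegree hXX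
    rwa [Polynomial.natDegree_X_pow, Polynomial.natDegree_X_pow] at this
  -- assemble
  rw [f.as_sum]
  exact Subalgebra.sum_mem _ fun d hd =>
    balanced_monomial_mem (∑ i, d (Sum.inl i)) d (coeff d f) rfl (hbal d hd).symm
end
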